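/- Let J be a nonnegative random variable on a probability space (M, μ) such that lim_{t→∞} t² μ(J ≥ t) = c for some constant c > 0. Then lim_{t→∞} E(J² · 1_{J < t}) / ln t = 2c. -/

import Mathlib

open MeasureTheory Filter

open Set in
lemma cesaro_aux {H : ℝ → ℝ} (hm : Measurable H) (h0 : ∀ s, 0 ≤ H s) (h1 : ∀ s, H s ≤ 1)
    {c : ℝ} (hc : 0 < c) (hlim : Tendsto (fun s => s * H s) atTop (nhds c)) :
    Tendsto (fun T => (∫ s in (0:ℝ)..T, H s) / Real.log T) atTop (nhds c) := by
  have hint : ∀ a b : ℝ, IntervalIntegrable H volume a b := by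
    intro a b
    rw [intervalIntegrable_iff]
    apply Measure.integrableOn_of_bounded (M := 1) measure_Ioc_lt_top.ne hm.aestronglyMeasurable
    exact ae_of_all _ (fun s => by rw [Real.norm_eq_abs, abs_of_nonneg (h0 s)]; exact h1 s)
  rw [Metric.tendsto_atTop]
  intro ε hε
  set δ := min (ε/4) (c/2) with hδdef
  have hδ : 0 < δ := lt_min (by linarith) (by linarith)
  have hδε : δ ≤ ε/4 := min_le_left _ _
  have hδc : δ ≤ c/2 := min_le_right _ _
  obtain ⟨S₀, hS₀⟩ := (Metric.tendsto_atTop.1 hlim) δ hδ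
  set S := max S₀ 1 with hSdef
  have hS1 : (1:ℝ) ≤ S := le_max_right _ _
  have hSpos : (0:ℝ) < S := by linarith
  have hlogS : 0 ≤ Real.log S := Real.log_nonneg hS1
  have hbound : ∀ s, S ≤ s → (c - δ)/s ≤ H s ∧ H s ≤ (c + δ)/s := by
    intro s hs
    have hs0 : (0:ℝ) < s := lt_of_lt_of_le hSpos hs
    have h2 := hS₀ s (le_trans (le_max_left _ _) hs)
    rw [Real.dist_eq, abs_lt] at h2
    constructor
    · rw [div_le_iff₀ hs0]; nlinarith [h2.1]
    · rw [le_div_iff₀ hs0]; nlinarith [h2.2]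
  set K := max (max (4*S/ε) (4*c*Real.log S/ε)) 1 with hKdef
  refine ⟨max (S+1) (Real.exp K), fun T hT => ?_⟩
  have hTS : S + 1 ≤ T := le_trans (le_max_left _ _) hT
  have hT1 : (1:ℝ) < T := by linarith
  have hST : S ≤ T := by linarith
  have hL : K ≤ Real.log T := by
    have := Real.log_le_log (Real.exp_pos K) (le_trans (le_max_right _ _) hT)
    rwa [Real.log_exp] at this
  have hLpos : 0 < Real.log T := lt_of_lt_of_le (lt_of_lt_of_le one_pos (le_max_right _ _)) hL
  have hsplit : ∫ s in (0:ℝ)..T, H s = (∫ s in (0:ℝ)..S, H s) + ∫ s in S..T, H s :=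
    (intervalIntegral.integral_add_adjacent_intervals (hint 0 S) (hint S T)).symm
  have h0S_le : ∫ s in (0:ℝ)..S, H s ≤ S := by
    calc ∫ s in (0:ℝ)..S, H s ≤ ∫ s in (0:ℝ)..S, (1:ℝ) :=
          intervalIntegral.integral_mono_on (le_of_lt hSpos) (hint 0 S)
            intervalIntegrable_const (fun s _ => h1 s)
      _ = S := by simp
  have h0S_nn : 0 ≤ ∫ s in (0:ℝ)..S, H s :=
    intervalIntegral.integral_nonneg (le_of_lt hSpos) (fun s _ => h0 s)
  have hinv : IntervalIntegrable (fun s : ℝ => 1/s) volume S T := by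
    apply intervalIntegral.intervalIntegrable_one_div (f := fun s : ℝ => s)
    · intro x hx
      rw [Set.uIcc_of_le hST] at hx
      exact ne_of_gt (lt_of_lt_of_le hSpos hx.1)
    · fun_prop
  have hlog_eq : ∫ s in S..T, 1/s = Real.log T - Real.log S := by
    rw [integral_one_div (by rw [Set.uIcc_of_le hST]; intro h; exact absurd h.1 (by linarith))]
    rw [Real.log_div (by linarith) (by linarith)]
  have hub : ∫ s in S..T, H s ≤ (c+δ) * (Real.log T - Real.log S) := by
    have h3 : ∫ s in S..T, H s ≤ ∫ s in S..T, (c+δ) * (1/s) := by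
      apply intervalIntegral.integral_mono_on hST (hint S T) (hinv.const_mul _)
      intro s hs
      have h4 := (hbound s hs.1).2
      rwa [mul_one_div]
    rwa [intervalIntegral.integral_const_mul, hlog_eq] at h3
  have hlb : (c-δ) * (Real.log T - Real.log S) ≤ ∫ s in S..T, H s := by
    have h3 : ∫ s in S..T, (c-δ) * (1/s) ≤ ∫ s in S..T, H s := by
      apply intervalIntegral.integral_mono_on hST (hinv.const_mul _) (hint S T)
      intro s hs
      rw [mul_one_div]
      exact (hbound s hs.1).1
    rwa [intervalIntegral.integral_const_mul, hlog_eq] at h3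
  set A := ∫ s in (0:ℝ)..T, H s with hA
  have hKS : 4*S/ε ≤ Real.log T := le_trans (le_trans (le_max_left _ _) (le_max_left _ _)) hL
  have hKc : 4*c*Real.log S/ε ≤ Real.log T := le_trans (le_trans (le_max_right _ _) (le_max_left _ _)) hL
  have hS_div : S / Real.log T ≤ ε/4 := by
    rw [div_le_iff₀ hLpos]
    rw [div_le_iff₀ hε] at hKS
    linarith
  have hcS_div : c * (Real.log S / Real.log T) ≤ ε/4 := by
    rw [← mul_div_assoc, div_le_iff₀ hLpos]
    rw [div_le_iff₀ hε] at hKc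
    linarith
  rw [Real.dist_eq, abs_lt]
  have hAlb : (c-δ) * (Real.log T - Real.log S) ≤ A := by
    rw [hsplit]; linarith
  have hAub : A ≤ S + (c+δ) * Real.log T := by
    rw [hsplit]
    have h5 : (c+δ) * (Real.log T - Real.log S) ≤ (c+δ) * Real.log T :=
      mul_le_mul_of_nonneg_left (by linarith) (by linarith)
    linarith
  constructor
  · have key : ((c-δ) * (Real.log T - Real.log S))/Real.log T
        = (c-δ) - (c-δ)*(Real.log S/Real.log T) := by
      field_simp
    have h7 : (c-δ)*(Real.log S/Real.log T) ≤ ε/4 := by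
      have h8 : (c-δ)*(Real.log S/Real.log T) ≤ c*(Real.log S/Real.log T) :=
        mul_le_mul_of_nonneg_right (by linarith) (div_nonneg hlogS hLpos.le)
      linarith
    have h9 : ((c-δ) * (Real.log T - Real.log S))/Real.log T ≤ A / Real.log T :=
      div_le_div_of_nonneg_right hAlb hLpos.le
    rw [key] at h9
    linarith
  · have h6 : A/Real.log T ≤ (S + (c+δ)*Real.log T)/Real.log T :=
      div_le_div_of_nonneg_right hAub hLpos.le
    have h6' : (S + (c+δ)*Real.log T)/Real.log T = S/Real.log T + (c+δ) := by
      field_simp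
    rw [h6'] at h6
    linarith

open Set in
theorem stmt5 {Ω : Type*} [MeasurableSpace Ω] (μ : Measure Ω) [IsProbabilityMeasure μ]
    (J : Ω → ℝ) (hnn : ∀ ω, 0 ≤ J ω) (hmeas : Measurable J)
    (c : ℝ) (hc : 0 < c)
    (htail : Tendsto (fun t : ℝ => t ^ 2 * (μ {ω | t ≤ J ω}).toReal) atTop (nhds c)) :
    Tendsto (fun t : ℝ =>
        (∫ ω, Set.indicator {ω | J ω < t} (fun ω => (J ω) ^ 2) ω ∂μ) / Real.log t)
      atTop (nhds (2 * c)) := by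
  set G : ℝ → ℝ := fun u => (μ {ω | u < J ω}).toReal with hGdef
  set D : ℝ → ℝ := fun u => (μ {ω | u ≤ J ω}).toReal with hDdef
  set H : ℝ → ℝ := fun s => G (Real.sqrt s) with hHdef
  have hGanti : Antitone G := by
    intro u v huv
    exact ENNReal.toReal_mono (measure_ne_top μ _)
      (measure_mono (fun ω h => lt_of_le_of_lt huv h))
  have hGm : Measurable G := hGanti.measurable
  have hHm : Measurable H := hGm.comp Real.continuous_sqrt.measurable
  have h0 : ∀ s, 0 ≤ H s := fun s => ENNReal.toReal_nonneg
  have h1 : ∀ s, H s ≤ 1 := by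
    intro s
    have h2 : μ {ω | Real.sqrt s < J ω} ≤ 1 := prob_le_one
    have h3 := ENNReal.toReal_mono (by simp) h2
    simpa using h3
  -- tail limit for G
  have hGtail : Tendsto (fun u : ℝ => u^2 * G u) atTop (nhds c) := by
    have hadd : Tendsto (fun t : ℝ => t + 1) atTop atTop :=
      tendsto_atTop_add_const_right _ 1 tendsto_id
    have l1 : Tendsto (fun t : ℝ => t/(t+1)) atTop (nhds 1) := by
      have h2 : Tendsto (fun t : ℝ => 1 - ((t:ℝ)+1)⁻¹) atTop (nhds (1 - 0)) :=
        tendsto_const_nhds.sub (tendsto_inv_atTop_zero.comp hadd)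
      rw [sub_zero] at h2
      apply Tendsto.congr' _ h2
      filter_upwards [eventually_gt_atTop 0] with t ht
      field_simp
      ring
    have l2 : Tendsto (fun t : ℝ => (t+1)^2 * D (t+1)) atTop (nhds c) := htail.comp hadd
    have l3 : Tendsto (fun t : ℝ => (t/(t+1))^2 * ((t+1)^2 * D (t+1))) atTop
        (nhds (1^2 * c)) := (l1.pow 2).mul l2
    rw [one_pow, one_mul] at l3
    have l4 : Tendsto (fun t : ℝ => t^2 * D (t+1)) atTop (nhds c) := by
      apply Tendsto.congr' _ l3
      filter_upwards [eventually_gt_atTop 0] with t ht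
      have h4 : t + 1 ≠ 0 := by linarith
      field_simp
    apply tendsto_of_tendsto_of_tendsto_of_le_of_le' l4 htail
    · filter_upwards [eventually_ge_atTop 0] with t ht
      have hsub : {ω | t + 1 ≤ J ω} ⊆ {ω | t < J ω} := fun ω h => by
        simp only [Set.mem_setOf_eq] at *; linarith
      exact mul_le_mul_of_nonneg_left
        (ENNReal.toReal_mono (measure_ne_top μ _) (measure_mono hsub)) (by positivity)
    · filter_upwards [eventually_ge_atTop 0] with t ht
      have hsub : {ω | t < J ω} ⊆ {ω | t ≤ J ω} := fun ω h => by
        simp only [Set.mem_setOf_eq] at *; exact le_of_lt h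
      exact mul_le_mul_of_nonneg_left
        (ENNReal.toReal_mono (measure_ne_top μ _) (measure_mono hsub)) (by positivity)
  -- limit for H
  have hsqrt_top : Tendsto Real.sqrt atTop atTop := by
    apply tendsto_atTop_atTop_of_monotone (fun a b h => Real.sqrt_le_sqrt h)
    intro b
    exact ⟨(max b 0)^2, by rw [Real.sqrt_sq (le_max_right b 0)]; exact le_max_left b 0⟩
  have hHlim : Tendsto (fun s => s * H s) atTop (nhds c) := by
    have hcomp : Tendsto (fun s : ℝ => (Real.sqrt s)^2 * G (Real.sqrt s)) atTop (nhds c) :=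
      hGtail.comp hsqrt_top
    apply Tendsto.congr' _ hcomp
    filter_upwards [eventually_ge_atTop 0] with s hs
    rw [Real.sq_sqrt hs]
  -- key identity
  have key : ∀ t : ℝ, 1 < t →
      (∫ ω, Set.indicator {ω | J ω < t} (fun ω => (J ω) ^ 2) ω ∂μ)
        = (∫ s in (0:ℝ)..t^2, H s) - t^2 * D t := by
    intro t ht
    have htpos : (0:ℝ) < t := by linarith
    have hT2 : (0:ℝ) < t^2 := by positivity
    set f : Ω → ℝ := fun ω => Set.indicator {ω | J ω < t} (fun ω => (J ω)^2) ω with hfdef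
    have hsetm : MeasurableSet {ω | J ω < t} := measurableSet_lt hmeas measurable_const
    have hfmeas : Measurable f := (hmeas.pow_const 2).indicator hsetm
    have hfnn : ∀ ω, 0 ≤ f ω := fun ω => Set.indicator_nonneg (fun ω _ => sq_nonneg _) ω
    have hfbd : ∀ ω, |f ω| ≤ t^2 := by
      intro ω
      rw [abs_of_nonneg (hfnn ω)]
      simp only [hfdef]
      by_cases h : ω ∈ {ω | J ω < t}
      · rw [Set.indicator_of_mem h]
        exact pow_le_pow_left₀ (hnn ω) (le_of_lt h) 2
      · rw [Set.indicator_of_notMem h]; positivity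
    have hfint : Integrable f μ := by
      apply Integrable.mono' (integrable_const (t^2)) hfmeas.aestronglyMeasurable
      exact ae_of_all _ (fun ω => by rw [Real.norm_eq_abs]; exact hfbd ω)
    rw [hfint.integral_eq_integral_meas_lt (ae_of_all _ hfnn)]
    set φ : ℝ → ℝ := fun s => (μ {a | s < f a}).toReal with hφdef
    have hφanti : Antitone φ := by
      intro u v huv
      exact ENNReal.toReal_mono (measure_ne_top μ _)
        (measure_mono (fun a h => lt_of_le_of_lt huv h))
    have hφm : Measurable φ := hφanti.measurable
    have hφ1 : ∀ s, φ s ≤ 1 := by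
      intro s
      have h2 : μ {a | s < f a} ≤ 1 := prob_le_one
      have h3 := ENNReal.toReal_mono (by simp) h2
      simpa using h3
    have hφint : ∀ A : Set ℝ, volume A ≠ ⊤ → IntegrableOn φ A := by
      intro A hA
      apply Measure.integrableOn_of_bounded (M := 1) hA hφm.aestronglyMeasurable
      exact ae_of_all _ (fun s => by
        rw [Real.norm_eq_abs, abs_of_nonneg ENNReal.toReal_nonneg]; exact hφ1 s)
    have hset : ∀ s : ℝ, 0 < s → {a | s < f a} = {a | Real.sqrt s < J a} ∩ {a | J a < t} := by
      intro s hs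
      ext a
      simp only [Set.mem_setOf_eq, Set.mem_inter_iff]
      by_cases h : a ∈ {ω | J ω < t}
      · rw [hfdef]
        simp only [Set.indicator_of_mem h]
        have hJt : J a < t := h
        constructor
        · intro hlt
          refine ⟨?_, hJt⟩
          have hJpos : 0 < J a := by
            rcases (hnn a).lt_or_eq with h' | h'
            · exact h'
            · exfalso; rw [← h'] at hlt; simp at hlt; linarith
          rw [Real.sqrt_lt' hJpos]
          exact hlt
        · rintro ⟨h1', _⟩
          have hJpos : 0 < J a := lt_of_le_of_lt (Real.sqrt_nonneg s) h1'
          rwa [← Real.sqrt_lt' hJpos]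
      · rw [hfdef]
        simp only [Set.indicator_of_notMem h]
        constructor
        · intro h'; linarith
        · rintro ⟨_, h2'⟩; exact absurd h2' h
    have hzero : ∀ s : ℝ, t^2 ≤ s → φ s = 0 := by
      intro s hs
      have h0s : (0:ℝ) < s := lt_of_lt_of_le hT2 hs
      have hts : t ≤ Real.sqrt s := by
        rw [show t = Real.sqrt (t^2) from (Real.sqrt_sq htpos.le).symm]
        exact Real.sqrt_le_sqrt hs
      have hempty : {a | s < f a} = ∅ := by
        rw [hset s h0s]
        ext a
        simp only [Set.mem_inter_iff, Set.mem_setOf_eq, Set.mem_empty_iff_false, iff_false,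
          not_and]
        intro h1'
        linarith
      rw [hφdef]
      simp only [hempty, measure_empty, ENNReal.toReal_zero]
    -- split the integral
    have hunion : Set.Ioi (0:ℝ) = Set.Ioc 0 (t^2) ∪ Set.Ioi (t^2) :=
      (Set.Ioc_union_Ioi_eq_Ioi hT2.le).symm
    have hsplit : ∫ s in Set.Ioi (0:ℝ), φ s = (∫ s in Set.Ioc (0:ℝ) (t^2), φ s)
        + ∫ s in Set.Ioi (t^2), φ s := by
      rw [hunion]
      apply setIntegral_union
      · exact Set.Ioc_disjoint_Ioi le_rfl
      · exact measurableSet_Ioi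
      · exact hφint _ measure_Ioc_lt_top.ne
      · apply IntegrableOn.congr_fun (integrableOn_zero) _ measurableSet_Ioi
        intro s hs
        exact (hzero s (le_of_lt hs)).symm
    have hzero2 : ∫ s in Set.Ioi (t^2), φ s = 0 :=
      setIntegral_eq_zero_of_forall_eq_zero (fun s hs => hzero s (le_of_lt hs))
    -- compute on Ioc 0 t²
    have hDineq : μ {ω | t ≤ J ω} ≠ ⊤ := measure_ne_top μ _
    have hcong : ∀ s ∈ Set.Ioo (0:ℝ) (t^2), φ s = H s - D t := by
      intro s hs
      have hs0 : 0 < s := hs.1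
      have hst : Real.sqrt s < t := by
        rw [show t = Real.sqrt (t^2) from (Real.sqrt_sq htpos.le).symm]
        exact Real.sqrt_lt_sqrt hs0.le hs.2
      have hsub : {ω | t ≤ J ω} ⊆ {ω | Real.sqrt s < J ω} := by
        intro ω h; simp only [Set.mem_setOf_eq] at *; linarith
      have hdiff : {a | Real.sqrt s < J a} ∩ {a | J a < t}
          = {a | Real.sqrt s < J a} \ {ω | t ≤ J ω} := by
        ext a
        simp only [Set.mem_inter_iff, Set.mem_diff, Set.mem_setOf_eq, not_le]
      rw [hφdef]
      simp only [hset s hs0, hdiff]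
      rw [measure_diff hsub (hmeas measurableSet_Ici).nullMeasurableSet hDineq]
      rw [ENNReal.toReal_sub_of_le (measure_mono hsub) (measure_ne_top μ _)]
    have hIoc : ∫ s in Set.Ioc (0:ℝ) (t^2), φ s = (∫ s in (0:ℝ)..t^2, H s) - t^2 * D t := by
      rw [integral_Ioc_eq_integral_Ioo, setIntegral_congr_fun measurableSet_Ioo hcong]
      rw [integral_sub (by
            apply Measure.integrableOn_of_bounded (M := 1) measure_Ioo_lt_top.ne
              hHm.aestronglyMeasurable
            exact ae_of_all _ (fun s => by
              rw [Real.norm_eq_abs, abs_of_nonneg (h0 s)]; exact h1 s))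
          (integrableOn_const (C := D t) (μ := volume) measure_Ioo_lt_top.ne)]
      rw [setIntegral_const]
      rw [intervalIntegral.integral_of_le hT2.le, integral_Ioc_eq_integral_Ioo]
      rw [Real.volume_real_Ioo, sub_zero, max_eq_left hT2.le]
      rw [smul_eq_mul]
    change ∫ s in Set.Ioi (0:ℝ), φ s = _
    rw [hsplit, hzero2, add_zero, hIoc]
  -- assemble
  have part1 : Tendsto (fun t : ℝ => (∫ s in (0:ℝ)..t^2, H s)/Real.log t) atTop
      (nhds (2*c)) := by
    have base := cesaro_aux hHm h0 h1 hc hHlim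
    have hpow : Tendsto (fun t : ℝ => t^2) atTop atTop := tendsto_pow_atTop two_ne_zero
    have comp : Tendsto (fun t : ℝ => (∫ s in (0:ℝ)..t^2, H s)/Real.log (t^2)) atTop
        (nhds c) := base.comp hpow
    have hmul := comp.const_mul 2
    apply Tendsto.congr' _ (by simpa using hmul)
    filter_upwards [eventually_gt_atTop 1] with t ht
    have hlt : Real.log t ≠ 0 := ne_of_gt (Real.log_pos ht)
    field_simp
  have part2 : Tendsto (fun t : ℝ => (t^2 * D t) * (Real.log t)⁻¹) atTop (nhds 0) := by
    have h2 := htail.mul (Real.tendsto_log_atTop.inv_tendsto_atTop)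
    simpa using h2
  have heq : (fun t : ℝ => (∫ s in (0:ℝ)..t^2, H s)/Real.log t - (t^2 * D t) * (Real.log t)⁻¹)
      =ᶠ[atTop] (fun t : ℝ =>
        (∫ ω, Set.indicator {ω | J ω < t} (fun ω => (J ω) ^ 2) ω ∂μ) / Real.log t) := by
    filter_upwards [eventually_gt_atTop 1] with t ht
    rw [key t ht]
    ring
  exact Tendsto.congr' heq (by simpa using part1.sub part2)
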